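/- Let A be a finite-dimensional normed space, ρ ∈ A a fixed element, and ρ* ∈ A* a fixed functional with ρ*(ρ) = c > 0. Suppose G is a compact topological group acting by linear isometries on A such that g·ρ = ρ for all g ∈ G, and such that any functional L ∈ A* satisfying L ∘ g = L for all g ∈ G is a scalar multiple of ρ*. Then ‖ρ‖_A · ‖ρ*‖_{A*} = c. -/

import Mathlib

open MeasureTheory TopologicalSpace

/-- Averaging lemma: if a compact group `G` acts on a finite-dimensional normed space `A`
by linear isometries fixing `ρ`, and every `G`-invariant functional is a multiple of `ρ*`,
then `‖ρ‖_A · ‖ρ*‖_{A*} = c` where `c = ρ*(ρ) > 0`. -/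
theorem norm_mul_dualNorm_of_invariant
    (A : Type*) [NormedAddCommGroup A] [NormedSpace ℂ A] [FiniteDimensional ℂ A]
    (G : Type*) [Group G] [TopologicalSpace G] [CompactSpace G] [IsTopologicalGroup G]
    (φ : G → (A ≃ₗᵢ[ℂ] A))
    (hhom : ∀ g h : G, ∀ a : A, φ (g * h) a = φ g (φ h a))
    (hcont : Continuous fun p : G × A => φ p.1 p.2)
    (ρ : A) (ρs : A →L[ℂ] ℂ) (c : ℝ) (hc : 0 < c) (hpair : ρs ρ = (c : ℂ))
    (hfix : ∀ g : G, φ g ρ = ρ)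
    (hinv : ∀ L : A →L[ℂ] ℂ, (∀ (g : G) (a : A), L (φ g a) = L a) →
      ∃ lam : ℂ, L = lam • ρs) :
    ‖ρ‖ * ‖ρs‖ = c := by
  classical
  have hρ : ρ ≠ 0 := by
    intro h
    rw [h, map_zero] at hpair
    exact hc.ne' (by exact_mod_cast hpair.symm)
  have hρn : 0 < ‖ρ‖ := norm_pos_iff.mpr hρ
  obtain ⟨L, hL1, hLρ⟩ := exists_dual_vector ℂ ρ hρn.ne'
  borelize G
  set μ : Measure G := Measure.haarMeasure (⊤ : PositiveCompacts G) with hμ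
  haveI : IsProbabilityMeasure μ := by
    constructor
    have := Measure.haarMeasure_self (K₀ := (⊤ : PositiveCompacts G))
    rwa [PositiveCompacts.coe_top] at this
  -- continuity of the integrand
  have hcont' : ∀ a : A, Continuous fun g : G => L (φ g⁻¹ a) :=
    fun a => L.continuous.comp (hcont.comp (continuous_inv.prodMk continuous_const))
  have hbound : ∀ (a : A) (g : G), ‖L (φ g⁻¹ a)‖ ≤ ‖a‖ := by
    intro a g
    calc ‖L (φ g⁻¹ a)‖ ≤ ‖L‖ * ‖φ g⁻¹ a‖ := L.le_opNorm _
      _ = ‖a‖ := by rw [hL1, (φ g⁻¹).norm_map, one_mul]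
  have hint : ∀ a : A, Integrable (fun g : G => L (φ g⁻¹ a)) μ := by
    intro a
    refine ⟨(hcont' a).aestronglyMeasurable, ?_⟩
    exact HasFiniteIntegral.of_bounded (C := ‖a‖) (Filter.Eventually.of_forall (hbound a))
  -- the averaged functional
  set F : A →ₗ[ℂ] ℂ :=
    { toFun := fun a => ∫ g : G, L (φ g⁻¹ a) ∂μ
      map_add' := by
        intro a b
        simp only [map_add]
        exact integral_add (hint a) (hint b)
      map_smul' := by
        intro r a
        simp only [_root_.map_smul, RingHom.id_apply, smul_eq_mul]
        exact integral_const_mul r _ } with hF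
  set L₀ : A →L[ℂ] ℂ := LinearMap.toContinuousLinearMap F with hL₀
  have hL₀app : ∀ a : A, L₀ a = ∫ g : G, L (φ g⁻¹ a) ∂μ := fun a => rfl
  -- invariance
  have hinvL₀ : ∀ (h : G) (a : A), L₀ (φ h a) = L₀ a := by
    intro h a
    rw [hL₀app, hL₀app]
    have key : (fun g : G => L (φ g⁻¹ (φ h a))) =
        fun g : G => (fun g' : G => L (φ g'⁻¹ a)) (h⁻¹ * g) := by
      funext g
      simp only
      rw [← hhom]
      congr 2
      group
    rw [key, integral_mul_left_eq_self (fun g' : G => L (φ g'⁻¹ a)) h⁻¹]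
  have hL₀ρ : L₀ ρ = (‖ρ‖ : ℂ) := by
    rw [hL₀app]
    have : (fun g : G => L (φ g⁻¹ ρ)) = fun _ : G => L ρ := by
      funext g; rw [hfix]
    rw [this, integral_const, probReal_univ, one_smul, hLρ]
    norm_cast
  have hL₀norm : ‖L₀‖ ≤ 1 := by
    refine ContinuousLinearMap.opNorm_le_bound _ zero_le_one ?_
    intro a
    rw [hL₀app, one_mul]
    calc ‖∫ g : G, L (φ g⁻¹ a) ∂μ‖ ≤ ∫ g : G, ‖L (φ g⁻¹ a)‖ ∂μ :=
          norm_integral_le_integral_norm _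
      _ ≤ ∫ _ : G, ‖a‖ ∂μ := integral_mono (hint a).norm (integrable_const _)
          (hbound a)
      _ = ‖a‖ := by rw [integral_const, probReal_univ, one_smul]
  obtain ⟨lam, hlam⟩ := hinv L₀ (fun g a => hinvL₀ g a)
  have hlamρ : lam * (c : ℂ) = (‖ρ‖ : ℂ) := by
    have := congrArg (fun f : A →L[ℂ] ℂ => f ρ) hlam
    simp only [ContinuousLinearMap.smul_apply, smul_eq_mul, hpair] at this
    rw [← this, hL₀ρ]
  have hc0 : (c : ℂ) ≠ 0 := by exact_mod_cast hc.ne'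
  have hlamval : lam = ((‖ρ‖ / c : ℝ) : ℂ) := by
    push_cast
    exact (eq_div_iff hc0).mpr hlamρ
  have hnormlam : ‖lam‖ = ‖ρ‖ / c := by
    rw [hlamval, Complex.norm_real, Real.norm_of_nonneg (by positivity)]
  have hle : ‖ρ‖ * ‖ρs‖ ≤ c := by
    have : ‖L₀‖ = ‖lam‖ * ‖ρs‖ := by rw [hlam]; exact norm_smul lam ρs
    rw [this, hnormlam] at hL₀norm
    have := (div_le_one hc).mp (by
      have : ‖ρ‖ / c * ‖ρs‖ = ‖ρ‖ * ‖ρs‖ / c := by ring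
      rwa [this] at hL₀norm)
    linarith
  have hge : c ≤ ‖ρ‖ * ‖ρs‖ := by
    have : ‖ρs ρ‖ ≤ ‖ρs‖ * ‖ρ‖ := ρs.le_opNorm ρ
    rw [hpair, Complex.norm_real, Real.norm_of_nonneg hc.le] at this
    linarith [this]
  linarith
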